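/- Let N ≥ 8 be an integer divisible by 4. The N/4 linear functionals γ ↦ ψ_even^{(i,j,k,l)}(γ) on ℝ^{N/4}, indexed by (i,j,k,l) ∈ S_2, are linearly independent; equivalently, the N/4 × N/4 matrix whose row indexed by (i,j,k,l) ∈ S_2 has entries s_{2si} s_{2sj} s_{2sk} s_{2sl} for s = 1, …, N/4 is invertible. -/

import Mathlib

/-- `s_α = sin(απ/N)` -/
noncomputable def ss (N : ℕ) (a : ℤ) : ℝ := Real.sin (a * Real.pi / N)

/-- `ψ_even^{(i,j,k,l)}(γ) = ∑_{s=1}^{N/4} γ_s s_{2si} s_{2sj} s_{2sk} s_{2sl}`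
as a linear functional on `ℝ^{N/4}`; the vector `γ` is 0-indexed. -/
noncomputable def psiEvenLin (N : ℕ) (i j k l : ℤ) : (Fin (N / 4) → ℝ) →ₗ[ℝ] ℝ :=
  ∑ s : Fin (N / 4),
    (ss N ((2 * ((s : ℕ) + 1) : ℤ) * i) * ss N ((2 * ((s : ℕ) + 1) : ℤ) * j) *
      ss N ((2 * ((s : ℕ) + 1) : ℤ) * k) * ss N ((2 * ((s : ℕ) + 1) : ℤ) * l)) •
        LinearMap.proj s

/-- `S₂ = {(2−m, m, N/2−1, N/2−1) : m = 1 or 3 ≤ m ≤ N/4+1}` -/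
def S2set (N : ℕ) : Set (ℤ × ℤ × ℤ × ℤ) :=
  {x | ∃ m : ℤ, (m = 1 ∨ (3 ≤ m ∧ m ≤ (N : ℤ) / 4 + 1)) ∧
    x = (2 - m, m, (N : ℤ) / 2 - 1, (N : ℤ) / 2 - 1)}

/-- Enumeration of the values of `m` indexing `S₂`: row `t` (0-indexed)
corresponds to `m = 1` for `t = 0` and `m = t + 2` for `t ≥ 1`
(so `m` runs through `1, 3, 4, …, N/4 + 1`). -/
def mOf (N : ℕ) (t : Fin (N / 4)) : ℤ := if (t : ℕ) = 0 then 1 else (t : ℕ) + 2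

/-- The `N/4 × N/4` matrix whose row indexed by `(2−m, m, N/2−1, N/2−1) ∈ S₂`
has entries `s_{2s(2−m)} s_{2sm} s_{2s(N/2−1)} s_{2s(N/2−1)}`, `s = 1, …, N/4`. -/
noncomputable def MevenMat (N : ℕ) : Matrix (Fin (N / 4)) (Fin (N / 4)) ℝ :=
  fun t s =>
    ss N ((2 * ((s : ℕ) + 1) : ℤ) * (2 - mOf N t)) *
    ss N ((2 * ((s : ℕ) + 1) : ℤ) * mOf N t) *
    ss N ((2 * ((s : ℕ) + 1) : ℤ) * ((N : ℤ) / 2 - 1)) *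
    ss N ((2 * ((s : ℕ) + 1) : ℤ) * ((N : ℤ) / 2 - 1))

open Polynomial Polynomial.Chebyshev Real


lemma cheb_deg : ∀ k : ℕ, (T ℝ ((k : ℤ) + 1)).natDegree = k + 1 ∧
    (T ℝ ((k : ℤ) + 1)).leadingCoeff = 2 ^ k := by
  intro k
  induction k using Nat.strong_induction_on with
  | _ k IH =>
    match k with
    | 0 => simp [T_one]
    | 1 =>
      have e : ((1:ℕ):ℤ) + 1 = 2 := by norm_num
      rw [e, T_two]
      have h2 : ((2:ℝ[X]) * X ^ 2 - 1).natDegree = 2 := by compute_degree!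
      refine ⟨h2, ?_⟩
      rw [leadingCoeff, h2]
      simp [coeff_sub, coeff_one]
    | (j+2) =>
      obtain ⟨hd1, hl1⟩ := IH (j+1) (by omega)
      obtain ⟨hd0, hl0⟩ := IH j (by omega)
      rw [show ((j+1:ℕ):ℤ) + 1 = (j:ℤ) + 1 + 1 by push_cast; ring] at hd1 hl1
      rw [show ((j+2:ℕ):ℤ) + 1 = (j:ℤ) + 1 + 2 by push_cast; ring]
      have hT : T ℝ ((j:ℤ) + 1 + 2) = 2 * X * T ℝ ((j:ℤ)+1+1) - T ℝ ((j:ℤ)+1) := by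
        have := T_add_two ℝ ((j:ℤ)+1)
        convert this using 3
      have hne1 : T ℝ ((j:ℤ)+1+1) ≠ 0 := leadingCoeff_ne_zero.mp (by rw [hl1]; positivity)
      have h2X : (2 * X : ℝ[X]) ≠ 0 := by
        intro h
        have := congrArg (fun p => Polynomial.coeff p 1) h
        simp at this
      have hdX : (2 * X : ℝ[X]).natDegree = 1 := by compute_degree!
      have hq : ((2:ℝ[X]) * X * T ℝ ((j:ℤ)+1+1)).natDegree = j + 3 := by
        rw [natDegree_mul h2X hne1, hd1, hdX]; omega
      have hlX : (2 * X : ℝ[X]).leadingCoeff = 2 := by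
        rw [leadingCoeff, hdX]; simp
      have hql : ((2:ℝ[X]) * X * T ℝ ((j:ℤ)+1+1)).leadingCoeff = 2 ^ (j+2) := by
        rw [leadingCoeff_mul, hl1, hlX]; ring
      have hlt : (T ℝ ((j:ℤ)+1)).natDegree < ((2:ℝ[X]) * X * T ℝ ((j:ℤ)+1+1)).natDegree := by
        rw [hq, hd0]; omega
      have hdeg : (T ℝ ((j:ℤ)+1+2)).natDegree = j + 3 := by
        rw [hT, natDegree_sub_eq_left_of_natDegree_lt hlt, hq]
      refine ⟨by rw [hdeg], ?_⟩
      rw [leadingCoeff, hdeg, hT, coeff_sub,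
        show (T ℝ ((j:ℤ)+1)).coeff (j+3) = 0 from
          coeff_eq_zero_of_natDegree_lt (by rw [hd0]; omega),
        sub_zero, show (j+3 : ℕ) = ((2:ℝ[X]) * X * T ℝ ((j:ℤ)+1+1)).natDegree from hq.symm,
        coeff_natDegree, hql]

noncomputable def Paux (m : ℤ) : ℝ[X] := (T ℝ (m-1) - X) /ₘ (X - C 1)

lemma T_eval_one (n : ℤ) : (T ℝ n).eval 1 = 1 := by
  have h := T_real_cos 0 n
  simpa using h

lemma Paux_mul (m : ℤ) : (X - C 1) * Paux m = T ℝ (m-1) - X := by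
  refine mul_divByMonic_eq_iff_isRoot.2 ?_
  simp [Polynomial.IsRoot, _root_.T_eval_one]

lemma Paux_eval (m : ℤ) (x : ℝ) :
    (T ℝ (m-1)).eval x - x = (x - 1) * (Paux m).eval x := by
  have h := congrArg (Polynomial.eval x) (Paux_mul m)
  simp only [eval_mul, eval_sub, eval_X, eval_C] at h
  linarith [h]

lemma Paux_one : Paux 1 = C (-1) := by
  have h1 : (X - C 1 : ℝ[X]) * Paux 1 = T ℝ 0 - X := by
    have := Paux_mul 1; norm_num at this ⊢; exact this
  rw [T_zero] at h1
  have h2 : (X - C 1 : ℝ[X]) * C (-1) = 1 - X := by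
    simp only [map_neg, map_one]; ring
  exact mul_left_cancel₀ (X_sub_C_ne_zero 1) (h1.trans h2.symm)

lemma Paux_deg (t : ℕ) (ht : 1 ≤ t) :
    (Paux ((t:ℤ)+2)).natDegree = t ∧ (Paux ((t:ℤ)+2)).coeff t ≠ 0 := by
  have hd : (T ℝ ((t:ℤ)+1)).natDegree = t+1 := (cheb_deg t).1
  have hl : (T ℝ ((t:ℤ)+1)).leadingCoeff = 2 ^ t := (cheb_deg t).2
  have e : (t:ℤ)+2-1 = (t:ℤ)+1 := by ring
  have hsub : (T ℝ ((t:ℤ)+1) - X).natDegree = t+1 := by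
    rw [natDegree_sub_eq_left_of_natDegree_lt (by rw [hd, natDegree_X]; omega), hd]
  have hPd : (Paux ((t:ℤ)+2)).natDegree = t := by
    unfold Paux
    rw [e, natDegree_divByMonic _ (monic_X_sub_C 1), hsub, natDegree_X_sub_C]; omega
  have hmul : (X - C 1 : ℝ[X]) * Paux ((t:ℤ)+2) = T ℝ ((t:ℤ)+1) - X := by
    rw [← e]; exact Paux_mul _
  have hsubne : T ℝ ((t:ℤ)+1) - X ≠ 0 := by
    intro h; rw [h] at hsub; simp at hsub
  have hPne : Paux ((t:ℤ)+2) ≠ 0 := by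
    intro h; rw [h, mul_zero] at hmul; exact hsubne hmul.symm
  refine ⟨hPd, ?_⟩
  have : (Paux ((t:ℤ)+2)).coeff ((Paux ((t:ℤ)+2)).natDegree) ≠ 0 := by
    rw [coeff_natDegree]; exact leadingCoeff_ne_zero.mpr hPne
  rwa [hPd] at this

lemma entry_formula (c : ℕ) (hc : 1 ≤ c) (s : ℕ) (hs : s + 1 ≤ c) (m : ℤ) :
    ss (4*c) ((2*((s:ℕ)+1):ℤ) * (2 - m)) * ss (4*c) ((2*((s:ℕ)+1):ℤ) * m) *
    ss (4*c) ((2*((s:ℕ)+1):ℤ) * (((4*c:ℕ):ℤ)/2 - 1)) *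
    ss (4*c) ((2*((s:ℕ)+1):ℤ) * (((4*c:ℕ):ℤ)/2 - 1)) =
    (Paux m).eval (Real.cos (((s:ℝ)+1) * π / c)) *
      (-((1 - Real.cos (((s:ℝ)+1) * π / c))^2 / 4)) := by
  have hcR : (c:ℝ) ≠ 0 := by positivity
  set θ : ℝ := (2*((s:ℝ)+1)) * π / (4*c) with hθ
  have hss : ∀ i : ℤ, ss (4*c) ((2*((s:ℕ)+1):ℤ) * i) = Real.sin ((i:ℝ) * θ) := by
    intro i; unfold ss; congr 1; rw [hθ]; push_cast; field_simp
  have h2 : (((4*c:ℕ):ℤ)/2 - 1) = (2*(c:ℤ) - 1 : ℤ) := by push_cast; omega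
  rw [h2, hss, hss, hss]
  have hcosangle : Real.cos (((s:ℝ)+1) * π / c) = Real.cos (2*θ) := by
    congr 1; rw [hθ]; field_simp; ring
  rw [hcosangle]
  have hlast : Real.sin (((2*(c:ℤ)-1:ℤ):ℝ) * θ) ^ 2 = Real.sin θ ^ 2 := by
    have harg : ((2*(c:ℤ)-1:ℤ):ℝ) * θ = ((s+1:ℕ):ℝ)*π - θ := by
      rw [hθ]; push_cast; field_simp; ring
    rw [harg, Real.sin_sub, Real.sin_nat_mul_pi]
    have hc2 : Real.cos (((s+1:ℕ):ℝ)*π)^2 = 1 := by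
      rw [Real.cos_sq']; rw [Real.sin_nat_mul_pi]; norm_num
    rw [zero_mul, zero_sub, neg_sq, mul_pow, hc2, one_mul]
  have hpair : Real.sin (((2-m:ℤ):ℝ) * θ) * Real.sin ((m:ℝ) * θ) =
      (Real.cos (((m:ℝ)-1)*(2*θ)) - Real.cos (2*θ))/2 := by
    have h := Real.cos_sub_cos (((m:ℝ)-1)*(2*θ)) (2*θ)
    rw [show ((((m:ℝ)-1)*(2*θ)) + 2*θ)/2 = (m:ℝ)*θ by ring,
        show ((((m:ℝ)-1)*(2*θ)) - 2*θ)/2 = ((m:ℝ)-2)*θ by ring] at h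
    rw [show (((2-m:ℤ):ℝ)) * θ = -(((m:ℝ)-2)*θ) by push_cast; ring, Real.sin_neg]
    linarith
  have hT : Real.cos (((m:ℝ)-1)*(2*θ)) = (T ℝ (m-1)).eval (Real.cos (2*θ)) := by
    rw [T_real_cos]; congr 1; push_cast; ring
  have hsinsq : Real.sin θ^2 = (1 - Real.cos (2*θ))/2 := by
    rw [Real.sin_sq_eq_half_sub]; ring
  have key : Real.sin (((2-m:ℤ):ℝ) * θ) * Real.sin ((m:ℝ) * θ) *
      Real.sin (((2*(c:ℤ)-1:ℤ):ℝ) * θ) * Real.sin (((2*(c:ℤ)-1:ℤ):ℝ) * θ) =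
      (((T ℝ (m-1)).eval (Real.cos (2*θ)) - Real.cos (2*θ))/2) *
        ((1 - Real.cos (2*θ))/2) := by
    have e1 : Real.sin (((2*(c:ℤ)-1:ℤ):ℝ) * θ) * Real.sin (((2*(c:ℤ)-1:ℤ):ℝ) * θ) =
        Real.sin θ ^ 2 := by rw [← hlast]; ring
    calc Real.sin (((2-m:ℤ):ℝ) * θ) * Real.sin ((m:ℝ) * θ) *
        Real.sin (((2*(c:ℤ)-1:ℤ):ℝ) * θ) * Real.sin (((2*(c:ℤ)-1:ℤ):ℝ) * θ)
        = (Real.sin (((2-m:ℤ):ℝ) * θ) * Real.sin ((m:ℝ) * θ)) *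
          (Real.sin (((2*(c:ℤ)-1:ℤ):ℝ) * θ) * Real.sin (((2*(c:ℤ)-1:ℤ):ℝ) * θ)) := by ring
      _ = ((Real.cos (((m:ℝ)-1)*(2*θ)) - Real.cos (2*θ))/2) * Real.sin θ ^ 2 := by
          rw [hpair, e1]
      _ = _ := by rw [hT, hsinsq]
  rw [key, Paux_eval m (Real.cos (2*θ))]
  ring

/-! ### Matrix factorization -/

noncomputable def xsv (c : ℕ) (s : Fin (4*c/4)) : ℝ := Real.cos (((s:ℝ)+1) * π / c)
noncomputable def csv (c : ℕ) (s : Fin (4*c/4)) : ℝ := -((1 - xsv c s)^2/4)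
noncomputable def Lmat (c : ℕ) : Matrix (Fin (4*c/4)) (Fin (4*c/4)) ℝ :=
  fun t k => (Paux (mOf (4*c) t)).coeff k
noncomputable def Wmat (c : ℕ) : Matrix (Fin (4*c/4)) (Fin (4*c/4)) ℝ :=
  fun k s => xsv c s ^ (k:ℕ) * csv c s

lemma Pdeg' (c : ℕ) (t : Fin (4*c/4)) :
    (Paux (mOf (4*c) t)).natDegree = (t:ℕ) ∧ (Paux (mOf (4*c) t)).coeff (t:ℕ) ≠ 0 := by
  rcases Nat.eq_zero_or_pos (t : ℕ) with h0 | hpos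
  · rw [mOf, if_pos h0, Paux_one, h0]
    simp
  · rw [mOf, if_neg (by omega)]
    exact Paux_deg (t:ℕ) hpos

lemma hfac (c : ℕ) (hc : 1 ≤ c) : MevenMat (4*c) = Lmat c * Wmat c := by
  ext t s
  have hs1 : (s:ℕ) + 1 ≤ c := by have := s.isLt; omega
  have hMe : MevenMat (4*c) t s =
      (Paux (mOf (4*c) t)).eval (xsv c s) * csv c s := by
    rw [MevenMat]
    exact entry_formula c hc (s:ℕ) hs1 (mOf (4*c) t)
  rw [hMe, Matrix.mul_apply]
  have hdeg : (Paux (mOf (4*c) t)).natDegree < 4*c/4 := by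
    rw [(Pdeg' c t).1]; exact t.isLt
  rw [Polynomial.eval_eq_sum_range' hdeg (xsv c s)]
  rw [Finset.sum_mul, ← Fin.sum_univ_eq_sum_range
    (fun i => (Paux (mOf (4*c) t)).coeff i * xsv c s ^ i * csv c s)]
  apply Finset.sum_congr rfl
  intro k _
  simp [Lmat, Wmat]; ring

lemma detL_ne (c : ℕ) : (Lmat c).det ≠ 0 := by
  rw [Matrix.det_of_lowerTriangular (Lmat c)
    (by
      intro i j hij
      have hij' : (i:ℕ) < (j:ℕ) := hij
      exact coeff_eq_zero_of_natDegree_lt (by rw [(Pdeg' c i).1]; exact hij'))]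
  exact Finset.prod_ne_zero_iff.2 (fun t _ => (Pdeg' c t).2)

lemma xsv_mem (c : ℕ) (s : Fin (4*c/4)) : ((s:ℝ)+1) * π / c ∈ Set.Icc 0 π := by
  have hc : 0 < c := by have := s.isLt; omega
  have hs1 : (s:ℕ) + 1 ≤ c := by have := s.isLt; omega
  constructor
  · positivity
  · rw [div_le_iff₀ (by positivity)]
    have h1 : ((s:ℝ)+1) ≤ c := by exact_mod_cast hs1
    nlinarith [Real.pi_pos]

lemma xsv_ne_one (c : ℕ) (s : Fin (4*c/4)) : xsv c s ≠ 1 := by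
  have hc : 0 < c := by have := s.isLt; omega
  intro h
  have h0 : xsv c s = Real.cos 0 := by rw [h, Real.cos_zero]
  have := Real.injOn_cos (xsv_mem c s) (Set.left_mem_Icc.2 Real.pi_pos.le) h0
  have hpos : 0 < ((s:ℝ)+1) * π / c := by positivity
  rw [this] at hpos
  exact lt_irrefl 0 hpos

lemma xsv_inj (c : ℕ) : Function.Injective (xsv c) := by
  intro a b hab
  have hc : 0 < c := by have := a.isLt; omega
  have := Real.injOn_cos (xsv_mem c a) (xsv_mem c b) hab
  have hπ := Real.pi_pos
  have hcR : (0:ℝ) < c := by exact_mod_cast hc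
  have hab : (a:ℕ) = (b:ℕ) := by
    have hπ : π ≠ 0 := Real.pi_ne_zero
    field_simp at this
    have h : ((a:ℕ):ℝ) = (b:ℕ) := by linarith
    exact_mod_cast h
  exact Fin.ext hab

lemma detW_ne (c : ℕ) : (Wmat c).det ≠ 0 := by
  have hW : Wmat c = (Matrix.vandermonde (xsv c)).transpose * Matrix.diagonal (csv c) := by
    ext k s
    rw [Matrix.mul_diagonal]
    simp [Matrix.vandermonde, Wmat, Matrix.transpose_apply]
  rw [hW, Matrix.det_mul, Matrix.det_transpose, Matrix.det_diagonal]
  apply mul_ne_zero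
  · exact Matrix.det_vandermonde_ne_zero_iff.2 (xsv_inj c)
  · refine Finset.prod_ne_zero_iff.2 (fun s _ => ?_)
    have h1 := xsv_ne_one c s
    simp only [csv]
    intro h
    apply h1
    have : (1 - xsv c s)^2 = 0 := by linarith [sq_nonneg (1 - xsv c s)]
    have := pow_eq_zero_iff (n := 2) (by norm_num) |>.1 this
    linarith

theorem psiEven_S2_linearIndependent (N : ℕ) (hN4 : 4 ∣ N) (hN8 : 8 ≤ N) :
    LinearIndependent ℝ (fun x : ↥(S2set N) =>
      psiEvenLin N x.1.1 x.1.2.1 x.1.2.2.1 x.1.2.2.2) ∧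
    IsUnit (MevenMat N) := by
  obtain ⟨c, rfl⟩ := hN4
  have hc : 2 ≤ c := by omega
  have hdet : (MevenMat (4*c)).det ≠ 0 := by
    rw [hfac c (by omega), Matrix.det_mul]
    exact mul_ne_zero (detL_ne c) (detW_ne c)
  have hunit : IsUnit (MevenMat (4*c)) :=
    (Matrix.isUnit_iff_isUnit_det _).2 (isUnit_iff_ne_zero.2 hdet)
  refine ⟨?_, hunit⟩
  -- rows of the matrix as linear functionals
  set rows : Fin (4*c/4) → ((Fin (4*c/4) → ℝ) →ₗ[ℝ] ℝ) :=
    fun t => ∑ s, MevenMat (4*c) t s • LinearMap.proj s with hrowsdef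
  have hrowsLI : LinearIndependent ℝ rows := by
    rw [Fintype.linearIndependent_iff]
    intro g hg
    have hvm : Matrix.vecMul g (MevenMat (4*c)) = 0 := by
      funext s
      have h1 := congrArg (fun φ : (Fin (4*c/4) → ℝ) →ₗ[ℝ] ℝ => φ (Pi.single s 1)) hg
      simp only [hrowsdef, LinearMap.zero_apply] at h1
      rw [show ((∑ t, g t • ∑ s', MevenMat (4*c) t s' • LinearMap.proj s')
          (Pi.single s 1) : ℝ) =
          ∑ t, g t * MevenMat (4*c) t s from ?_] at h1
      · simpa [Matrix.vecMul, dotProduct] using h1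
      · rw [LinearMap.sum_apply]
        apply Finset.sum_congr rfl
        intro t _
        rw [LinearMap.smul_apply, LinearMap.sum_apply, smul_eq_mul]
        congr 1
        rw [Finset.sum_eq_single s]
        · simp
        · intro b _ hb
          simp [LinearMap.proj_apply, Pi.single_apply, hb]
        · intro h; exact absurd (Finset.mem_univ s) h
    have hg0 := Matrix.eq_zero_of_vecMul_eq_zero hdet hvm
    intro i; exact congrFun hg0 i
  -- the indexing map
  have hmem : ∀ x : ↥(S2set (4*c)), ∃ m : ℤ,
      (m = 1 ∨ (3 ≤ m ∧ m ≤ (c:ℤ)+1)) ∧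
      x.val = (2-m, m, ((4*c:ℕ):ℤ)/2 - 1, ((4*c:ℕ):ℤ)/2 - 1) := by
    intro x
    obtain ⟨m, hm, hx⟩ := x.2
    refine ⟨m, ?_, hx⟩
    have h4 : ((4*c:ℕ):ℤ)/4 = c := by push_cast; omega
    rw [h4] at hm
    exact hm
  set tOf : ↥(S2set (4*c)) → Fin (4*c/4) := fun x =>
    ⟨if x.val.2.1 = 1 then 0 else (x.val.2.1 - 2).toNat, by
      obtain ⟨m, hm, hx⟩ := hmem x
      rw [hx]
      simp only
      rcases hm with h1 | ⟨h3, hle⟩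
      · rw [if_pos h1]; omega
      · rw [if_neg (by omega)]; omega⟩ with htOfdef
  have hmOf : ∀ x : ↥(S2set (4*c)), mOf (4*c) (tOf x) = x.val.2.1 := by
    intro x
    obtain ⟨m, hm, hx⟩ := hmem x
    have hx21 : x.val.2.1 = m := by rw [hx]
    have hval : ((tOf x : Fin (4*c/4)) : ℕ) = if m = 1 then 0 else (m - 2).toNat := by
      rw [htOfdef]; simp only [hx21]
    rw [mOf, hval, hx21]
    rcases hm with h1 | ⟨h3, hle⟩
    · rw [if_pos h1, if_pos rfl, h1]
    · rw [if_neg (show ¬ m = 1 by omega)]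
      rw [if_neg (show ¬ (m-2).toNat = 0 by omega)]
      omega
  have htinj : Function.Injective tOf := by
    intro x y hxy
    obtain ⟨mx, hmx, hx⟩ := hmem x
    obtain ⟨my, hmy, hy⟩ := hmem y
    have h1 : mOf (4*c) (tOf x) = mOf (4*c) (tOf y) := by rw [hxy]
    rw [hmOf x, hmOf y] at h1
    have hx21 : x.val.2.1 = mx := by rw [hx]
    have hy21 : y.val.2.1 = my := by rw [hy]
    have : mx = my := by rw [← hx21, ← hy21]; exact h1
    apply Subtype.ext
    rw [hx, hy, this]
  have hfam : (fun x : ↥(S2set (4*c)) =>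
      psiEvenLin (4*c) x.1.1 x.1.2.1 x.1.2.2.1 x.1.2.2.2) = rows ∘ tOf := by
    funext x
    obtain ⟨m, hm, hx⟩ := hmem x
    have h1 : x.1.1 = 2 - m := by rw [hx]
    have h2 : x.1.2.1 = m := by rw [hx]
    have h3 : x.1.2.2.1 = ((4*c:ℕ):ℤ)/2 - 1 := by rw [hx]
    have h4 : x.1.2.2.2 = ((4*c:ℕ):ℤ)/2 - 1 := by rw [hx]
    have hmo : mOf (4*c) (tOf x) = m := by rw [hmOf x, h2]
    rw [h1, h2, h3, h4]
    show psiEvenLin (4*c) (2-m) m _ _ = rows (tOf x)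
    rw [psiEvenLin, hrowsdef]
    apply Finset.sum_congr rfl
    intro s _
    rw [MevenMat, hmo]
  rw [hfam]
  exact hrowsLI.comp tOf htinj
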